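/- arXiv:1604.04194 — 6 statements merged into one kernel-verified Lean document; each statement's English description precedes it below -/
import Mathlib

section
/- Let d ≥ 1 and n > d + 2 be integers, ε = 1/(n-d), ε̂ = 1/((d+1)(n-d)), and define weights w_1 = … = w_d = 1 - ε̂, w_{d+1} = 1 - (n-(d+1))ε + dε̂, w_{d+2} = … = w_n = ε. Then for every subset S of {1,…,n} with S nonempty and S ≠ {1,…,n}, the sum ∑_{i∈S} w_i is not an integer. -/
private lemma no_integer_partial_sums_aux (d n : ℕ) (a b c : ℕ) (m : ℤ)
    (hN : (n:ℚ) - d ≠ 0) (hD : ((d:ℚ) + 1) ≠ 0)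
    (hm : (a:ℚ) * (1 - 1 / ((d + 1) * (n - d))) +
      (b * (1 - ((n:ℚ) - (d + 1)) * (1 / (n - d)) + d * (1 / ((d + 1) * (n - d)))) +
      c * (1 / (n - d))) = m) :
    (a:ℚ) * ((d+1) * (n-d)) - a + b * (2*d+1) + c * (d+1) = m * ((d+1) * (n-d)) := by
  field_simp at hm
  apply mul_right_cancel₀ (mul_ne_zero hD (mul_ne_zero hN hN))
  linear_combination (((d:ℚ)+1) * (((n:ℚ)-d) * ((n:ℚ)-d))) * hm

set_option maxHeartbeats 1000000 in
theorem no_integer_partial_sums (d n : ℕ) (hd : 1 ≤ d) (hn : d + 2 < n)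
    (ε εhat : ℚ) (hε : ε = 1 / (n - d)) (hεhat : εhat = 1 / ((d + 1) * (n - d)))
    (w : ℕ → ℚ)
    (hw1 : ∀ i, 1 ≤ i → i ≤ d → w i = 1 - εhat)
    (hw2 : w (d + 1) = 1 - (n - (d + 1)) * ε + d * εhat)
    (hw3 : ∀ i, d + 2 ≤ i → i ≤ n → w i = ε) :
    ∀ S : Finset ℕ, S ⊆ Finset.Icc 1 n → S.Nonempty → S ≠ Finset.Icc 1 n →
      ¬ ∃ m : ℤ, ∑ i ∈ S, w i = (m : ℚ) := by
  intro S hS hne hfull h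
  obtain ⟨m, hm⟩ := h
  classical
  set S1 := S.filter (fun i => i ≤ d) with hS1def
  set S2 := S.filter (fun i => i = d + 1) with hS2def
  set S3 := S.filter (fun i => d + 2 ≤ i) with hS3def
  -- split the sum
  have hsplit1 : ∑ i ∈ S, w i = ∑ i ∈ S1, w i + ∑ i ∈ S.filter (fun i => ¬ i ≤ d), w i := by
    rw [hS1def, Finset.sum_filter_add_sum_filter_not]
  have hsplit2 : ∑ i ∈ S.filter (fun i => ¬ i ≤ d), w i
      = ∑ i ∈ S2, w i + ∑ i ∈ S3, w i := by
    rw [← Finset.sum_filter_add_sum_filter_not (S.filter (fun i => ¬ i ≤ d)) (fun i => i = d + 1)]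
    congr 1
    · congr 1
      rw [Finset.filter_filter, hS2def]
      apply Finset.filter_congr
      intro i hi
      omega
    · congr 1
      rw [Finset.filter_filter, hS3def]
      apply Finset.filter_congr
      intro i hi
      omega
  set a := S1.card with hadef
  set b := S2.card with hbdef
  set c := S3.card with hcdef
  have hsum1 : ∑ i ∈ S1, w i = a * (1 - εhat) := by
    rw [Finset.sum_congr rfl (fun i hi => ?_), Finset.sum_const, nsmul_eq_mul]
    rw [hS1def] at hi
    have hi' := Finset.mem_filter.mp hi
    have h1 : 1 ≤ i := by
      have := Finset.mem_Icc.mp (hS hi'.1); exact this.1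
    exact hw1 i h1 hi'.2
  have hsum2 : ∑ i ∈ S2, w i = b * w (d + 1) := by
    rw [Finset.sum_congr rfl (fun i hi => ?_), Finset.sum_const, nsmul_eq_mul]
    rw [hS2def] at hi
    have hi' := Finset.mem_filter.mp hi
    rw [hi'.2]
  have hsum3 : ∑ i ∈ S3, w i = c * ε := by
    rw [Finset.sum_congr rfl (fun i hi => ?_), Finset.sum_const, nsmul_eq_mul]
    rw [hS3def] at hi
    have hi' := Finset.mem_filter.mp hi
    have h2 : i ≤ n := (Finset.mem_Icc.mp (hS hi'.1)).2
    exact hw3 i hi'.2 h2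
  have ha : a ≤ d := by
    have : S1 ⊆ Finset.Icc 1 d := by
      intro i hi
      have hi' := Finset.mem_filter.mp hi
      have h1 : 1 ≤ i := (Finset.mem_Icc.mp (hS hi'.1)).1
      exact Finset.mem_Icc.mpr ⟨h1, hi'.2⟩
    have := Finset.card_le_card this
    simpa using this
  have hb : b ≤ 1 := by
    have : S2 ⊆ {d + 1} := by
      intro i hi
      have hi' := Finset.mem_filter.mp hi
      simp [hi'.2]
    have := Finset.card_le_card this
    simpa using this
  have hc : c ≤ n - d - 1 := by
    have : S3 ⊆ Finset.Icc (d + 2) n := by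
      intro i hi
      have hi' := Finset.mem_filter.mp hi
      have h2 : i ≤ n := (Finset.mem_Icc.mp (hS hi'.1)).2
      exact Finset.mem_Icc.mpr ⟨hi'.2, h2⟩
    have := Finset.card_le_card this
    rw [Nat.card_Icc] at this
    omega
  have hcard : S.card = a + b + c := by
    have h1 : a + (S.filter (fun i => ¬ i ≤ d)).card = S.card :=
      Finset.card_filter_add_card_filter_not (s := S) (p := fun i => i ≤ d)
    have h2 : ((S.filter (fun i => ¬ i ≤ d)).filter (fun i => i = d + 1)).card
        + ((S.filter (fun i => ¬ i ≤ d)).filter (fun i => ¬ i = d + 1)).card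
        = (S.filter (fun i => ¬ i ≤ d)).card :=
      Finset.card_filter_add_card_filter_not
        (s := S.filter (fun i => ¬ i ≤ d)) (p := fun i => i = d + 1)
    have e2 : (S.filter (fun i => ¬ i ≤ d)).filter (fun i => i = d + 1) = S2 := by
      rw [Finset.filter_filter, hS2def]
      apply Finset.filter_congr
      intro i hi
      omega
    have e3 : (S.filter (fun i => ¬ i ≤ d)).filter (fun i => ¬ i = d + 1) = S3 := by
      rw [Finset.filter_filter, hS3def]
      apply Finset.filter_congr
      intro i hi
      omega
    rw [e2, e3] at h2
    rw [hbdef, hcdef, hadef]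
    omega
  -- the main rational equation
  have hdq : (0:ℚ) < (d:ℚ) + 1 := by positivity
  have hnq : (d:ℚ) < n := by exact_mod_cast (by omega : d < n)
  have hN : (n:ℚ) - d ≠ 0 := by
    have : (0:ℚ) < (n:ℚ) - d := by linarith
    linarith
  have hD : ((d:ℚ) + 1) ≠ 0 := by positivity
  rw [hsplit1, hsplit2, hsum1, hsum2, hsum3, hw2, hε, hεhat] at hm
  have hQ : (a:ℚ) * ((d+1) * (n-d)) - a + b * (2*d+1) + c * (d+1)
      = m * ((d+1) * (n-d)) := by
    exact no_integer_partial_sums_aux d n a b c m hN hD hm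
  have hZ : (a:ℤ) * ((d+1) * ((n:ℤ)-d)) - a + b * (2*d+1) + c * (d+1)
      = m * ((d+1) * ((n:ℤ)-d)) := by
    exact_mod_cast hQ
  set k : ℤ := m - a with hkdef
  have hkey : (c:ℤ) * (d+1) + b * (2*d+1) - a = k * ((d+1) * ((n:ℤ)-d)) := by
    rw [hkdef]; ring_nf; ring_nf at hZ; linarith
  have haZ : (a:ℤ) ≤ d := by exact_mod_cast ha
  have hbZ : (b:ℤ) ≤ 1 := by exact_mod_cast hb
  have hcZ : (c:ℤ) ≤ (n:ℤ) - d - 1 := by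
    have : (c:ℤ) ≤ ((n - d - 1 : ℕ) : ℤ) := by exact_mod_cast hc
    omega
  have ha0 : (0:ℤ) ≤ a := Int.ofNat_nonneg a
  have hb0 : (0:ℤ) ≤ b := Int.ofNat_nonneg b
  have hc0 : (0:ℤ) ≤ c := Int.ofNat_nonneg c
  have hnZ : (d:ℤ) + 2 < n := by exact_mod_cast hn
  have hdZ : (1:ℤ) ≤ d := by exact_mod_cast hd
  set P : ℤ := ((d:ℤ)+1) * ((n:ℤ)-d) with hPdef
  have hP : (3:ℤ) * ((d:ℤ)+1) ≤ P := by
    rw [hPdef]; nlinarith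
  have hPd : (d:ℤ) < P := by nlinarith
  -- bound k
  have hx : ((n:ℤ)-d-1)*((d:ℤ)+1) = P - (d+1) := by rw [hPdef]; ring
  have hcmul : (c:ℤ) * (d+1) ≤ ((n:ℤ)-d-1)*((d:ℤ)+1) :=
    mul_le_mul_of_nonneg_right hcZ (by linarith)
  have hbmul : (b:ℤ) * (2*d+1) ≤ 2*d+1 := by
    have := mul_le_mul_of_nonneg_right hbZ (by linarith : (0:ℤ) ≤ 2*d+1)
    linarith
  have hcmul0 : (0:ℤ) ≤ (c:ℤ) * (d+1) := by positivity
  have hbmul0 : (0:ℤ) ≤ (b:ℤ) * (2*d+1) := by positivity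
  have hub : (c:ℤ) * (d+1) + b * (2*d+1) - a ≤ P + d := by linarith
  have hlb : -(d:ℤ) ≤ (c:ℤ) * (d+1) + b * (2*d+1) - a := by linarith
  have hk01 : k = 0 ∨ k = 1 := by
    by_contra hk
    push_neg at hk
    rcases lt_trichotomy k 0 with hlt | heq | hgt
    · have : k ≤ -1 := by omega
      have hkp : k * P ≤ -P := by nlinarith [hP, hdZ, this]
      rw [hkey] at hlb
      linarith
    · exact hk.1 heq
    · have h2 : 2 ≤ k := by omega
      have hkp : 2 * P ≤ k * P := by nlinarith [hP, hdZ, h2]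
      rw [hkey] at hub
      linarith
  rcases hk01 with hk0 | hk1
  · -- k = 0 : S must be empty
    rw [hk0, zero_mul] at hkey
    have hcz : (c:ℤ) = 0 := by
      by_contra h
      have h1 : (1:ℤ) ≤ c := by omega
      have h2 : (1:ℤ)*(d+1) ≤ (c:ℤ)*(d+1) := mul_le_mul_of_nonneg_right h1 (by linarith)
      linarith
    have hbz : (b:ℤ) = 0 := by
      by_contra h
      have h1 : (1:ℤ) ≤ b := by omega
      have h2 : (1:ℤ)*(2*d+1) ≤ (b:ℤ)*(2*d+1) := mul_le_mul_of_nonneg_right h1 (by linarith)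
      rw [hcz] at hkey
      linarith
    have haz : (a:ℤ) = 0 := by
      rw [hcz, hbz] at hkey
      linarith
    have hbz' : b = 0 := by omega
    have haz' : a = 0 := by omega
    have hcz' : c = 0 := by omega
    have : S.card = 0 := by rw [hcard, haz', hbz', hcz']
    have := hne.card_pos
    omega
  · -- k = 1 : S must be full
    rw [hk1, one_mul, hPdef] at hkey
    have hcfull : (c:ℤ) = (n:ℤ) - d - 1 := by
      by_contra h
      have h1 : (c:ℤ) ≤ (n:ℤ) - d - 2 := by omega
      have h2 : (c:ℤ)*((d:ℤ)+1) ≤ ((n:ℤ)-d-2)*((d:ℤ)+1) :=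
        mul_le_mul_of_nonneg_right h1 (by linarith)
      have h3 : ((n:ℤ)-d-2)*((d:ℤ)+1) = ((d:ℤ)+1)*((n:ℤ)-d) - 2*((d:ℤ)+1) := by ring
      linarith
    rw [hcfull] at hkey
    have hkey2 : (b:ℤ)*(2*d+1) = a + (d+1) := by linarith [hkey]
    have hb01 : b = 0 ∨ b = 1 := by omega
    have hbfull : (b:ℤ) = 1 := by
      rcases hb01 with h | h
      · rw [h] at hkey2; push_cast at hkey2; linarith
      · rw [h]; norm_num
    have hafull : (a:ℤ) = d := by
      rw [hbfull] at hkey2; linarith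
    have hScard : S.card = n := by
      have hc' : c = n - d - 1 := by omega
      have hb' : b = 1 := by omega
      have ha' : a = d := by omega
      rw [hcard, ha', hb', hc']
      omega
    apply hfull
    apply Finset.eq_of_subset_of_card_le hS
    rw [Nat.card_Icc, hScard]
    omega
end

section
/- Let d ≥ 1 and n > d + 2, ε = 1/(n-d), ε̂ = 1/((d+1)(n-d)), and weights w_1 = … = w_d = 1 - ε̂, w_{d+1} = 1 - (n-(d+1))ε + dε̂, w_{d+2} = … = w_n = ε. Then: (i) ∑_{i=d+1}^{n} w_i > 1; (ii) for every j with d+2 ≤ j ≤ n, ∑_{i=1}^{d} w_i + w_j > d; (iii) for every k with 1 ≤ k ≤ d+1, ∑_{i∈{1,…,d+1}\{k}} w_i + ∑_{i=d+2}^{n} w_i > d; and (iv) ∑_{i=1}^{d} w_i < d. -/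
theorem git_stability_inequalities (d n : ℕ) (hd : 1 ≤ d) (hn : d + 2 < n)
    (ε εhat : ℚ) (hε : ε = 1 / (n - d)) (hεhat : εhat = 1 / ((d + 1) * (n - d)))
    (w : ℕ → ℚ)
    (hw1 : ∀ i, 1 ≤ i → i ≤ d → w i = 1 - εhat)
    (hw2 : w (d + 1) = 1 - (n - (d + 1)) * ε + d * εhat)
    (hw3 : ∀ i, d + 2 ≤ i → i ≤ n → w i = ε) :
    (1 < ∑ i ∈ Finset.Icc (d + 1) n, w i) ∧
    (∀ j, d + 2 ≤ j → j ≤ n → (d : ℚ) < (∑ i ∈ Finset.Icc 1 d, w i) + w j) ∧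
    (∀ k, 1 ≤ k → k ≤ d + 1 →
      (d : ℚ) < (∑ i ∈ (Finset.Icc 1 (d + 1)).erase k, w i) + ∑ i ∈ Finset.Icc (d + 2) n, w i) ∧
    (∑ i ∈ Finset.Icc 1 d, w i < (d : ℚ)) := by
  have hA : (3 : ℚ) ≤ (n : ℚ) - d := by
    have : (d : ℚ) + 3 ≤ (n : ℚ) := by exact_mod_cast hn
    linarith
  have hApos : (0 : ℚ) < (n : ℚ) - d := by linarith
  have hD1 : (0 : ℚ) < (d : ℚ) + 1 := by positivity
  have hεhatpos : 0 < εhat := by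
    rw [hεhat]; positivity
  have hkey : ε = ((d : ℚ) + 1) * εhat := by
    rw [hε, hεhat]
    field_simp
  have hD : (1 : ℚ) ≤ (d : ℚ) := by exact_mod_cast hd
  -- sum over Icc 1 d
  have S1 : ∑ i ∈ Finset.Icc 1 d, w i = d * (1 - εhat) := by
    have h : ∀ i ∈ Finset.Icc 1 d, w i = 1 - εhat := by
      intro i hi; rw [Finset.mem_Icc] at hi; exact hw1 i hi.1 hi.2
    rw [Finset.sum_congr rfl h, Finset.sum_const, Nat.card_Icc]
    simp [nsmul_eq_mul]
  -- sum over Icc (d+2) n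
  have S2 : ∑ i ∈ Finset.Icc (d + 2) n, w i = ((n : ℚ) - d - 1) * ε := by
    have h : ∀ i ∈ Finset.Icc (d + 2) n, w i = ε := by
      intro i hi; rw [Finset.mem_Icc] at hi; exact hw3 i hi.1 hi.2
    rw [Finset.sum_congr rfl h, Finset.sum_const, Nat.card_Icc, nsmul_eq_mul]
    congr 1
    have h1 : n + 1 - (d + 2) = n - (d + 1) := by omega
    have h2 : d + 1 ≤ n := by omega
    rw [h1, Nat.cast_sub h2]
    push_cast
    ring
  have hIns : Finset.Icc (d + 1) n = insert (d + 1) (Finset.Icc (d + 2) n) := by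
    ext x; simp [Finset.mem_Icc]; omega
  have Sbig : ∑ i ∈ Finset.Icc (d + 1) n, w i
      = w (d + 1) + ((n : ℚ) - d - 1) * ε := by
    rw [hIns, Finset.sum_insert (by simp [Finset.mem_Icc]), S2]
  have S3 : ∑ i ∈ Finset.Icc 1 (d + 1), w i = d * (1 - εhat) + w (d + 1) := by
    rw [show Finset.Icc 1 (d + 1) = insert (d + 1) (Finset.Icc 1 d) by
      ext x; simp [Finset.mem_Icc]; omega,
      Finset.sum_insert (by simp [Finset.mem_Icc]), S1]
    ring
  refine ⟨?_, ?_, ?_, ?_⟩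
  · rw [Sbig, hw2]
    nlinarith [mul_pos (lt_of_lt_of_le one_pos hD) hεhatpos]
  · intro j hj1 hj2
    rw [S1, hw3 j hj1 hj2, hkey]
    nlinarith
  · intro k hk1 hk2
    have hmem : k ∈ Finset.Icc 1 (d + 1) := by simp [Finset.mem_Icc, hk1, hk2]
    have hsum : ∑ i ∈ (Finset.Icc 1 (d + 1)).erase k, w i
        = (d * (1 - εhat) + w (d + 1)) - w k := by
      rw [← S3, Finset.sum_erase_eq_sub hmem]
    rw [hsum, S2]
    rcases Nat.lt_or_ge k (d + 1) with hk | hk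
    · have hwk : w k = 1 - εhat := hw1 k hk1 (by omega)
      rw [hwk, hw2]
      nlinarith
    · have hkeq : k = d + 1 := by omega
      rw [hkeq, hw2]
      rw [hkey]
      nlinarith [mul_pos hD1 hεhatpos, mul_le_mul_of_nonneg_right hA (le_of_lt hεhatpos)]
  · rw [S1]
    nlinarith
end

section
/- Let n ≥ 1 and let I_1,…,I_k be subsets of {1,…,n}, each of cardinality at least 2. Let ~ be the equivalence relation on {1,…,n} generated by declaring a ~ b whenever a, b lie in a common I_j. Then every equivalence class C of ~ with |C| ≥ 2 is a union of some of the sets I_j. Consequently, if a_1,…,a_n are positive rationals with ∑_{i∈I_j} a_i > 1 for every j, then ∑_{i∈C} a_i > 1 for every equivalence class C with |C| ≥ 2. -/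
section Aux

variable {n k : ℕ} {I : Fin k → Finset (Fin n)}

private lemma eqvGen_endpoints {b c : Fin n}
    (h : Relation.EqvGen (fun a b => ∃ j, a ∈ I j ∧ b ∈ I j) b c) :
    b = c ∨ ((∃ j, b ∈ I j) ∧ (∃ j, c ∈ I j)) := by
  induction h with
  | rel x y hxy => exact Or.inr ⟨⟨hxy.choose, hxy.choose_spec.1⟩, ⟨hxy.choose, hxy.choose_spec.2⟩⟩
  | refl x => exact Or.inl rfl
  | symm x y _ ih => exact ih.imp Eq.symm And.symm
  | trans x y z _ _ ih1 ih2 =>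
      rcases ih1 with rfl | ⟨h1, hc1⟩
      · exact ih2
      · rcases ih2 with rfl | ⟨_, h2⟩
        · exact Or.inr ⟨h1, hc1⟩
        · exact Or.inr ⟨h1, h2⟩

private lemma block_subset_class {a x b : Fin n} {j : Fin k}
    (hx : x ∈ I j) (hb : b ∈ I j)
    (hxa : Relation.EqvGen (fun a b => ∃ j, a ∈ I j ∧ b ∈ I j) x a) :
    Relation.EqvGen (fun a b => ∃ j, a ∈ I j ∧ b ∈ I j) b a :=
  Relation.EqvGen.trans _ _ _ (Relation.EqvGen.rel _ _ ⟨j, hb, hx⟩) hxa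

end Aux

open Classical in
theorem eqvGen_class_union_of_blocks (n k : ℕ) (hn : 1 ≤ n)
    (I : Fin k → Finset (Fin n)) (hcard : ∀ j, 2 ≤ (I j).card) :
    (∀ a : Fin n,
      2 ≤ (Finset.univ.filter
            (fun b => Relation.EqvGen (fun a b => ∃ j, a ∈ I j ∧ b ∈ I j) b a)).card →
      ∃ S : Set (Fin k),
        {b : Fin n | Relation.EqvGen (fun a b => ∃ j, a ∈ I j ∧ b ∈ I j) b a} =
          ⋃ j ∈ S, (I j : Set (Fin n))) ∧
    (∀ w : Fin n → ℚ, (∀ i, 0 < w i) → (∀ j, 1 < ∑ i ∈ I j, w i) →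
      ∀ a : Fin n,
        2 ≤ (Finset.univ.filter
              (fun b => Relation.EqvGen (fun a b => ∃ j, a ∈ I j ∧ b ∈ I j) b a)).card →
        1 < ∑ i ∈ Finset.univ.filter
              (fun b => Relation.EqvGen (fun a b => ∃ j, a ∈ I j ∧ b ∈ I j) b a), w i) := by
  set R : Fin n → Fin n → Prop := fun a b => ∃ j, a ∈ I j ∧ b ∈ I j with hR
  -- every element of a class of size ≥ 2 lies in some block I j contained in the class
  have key : ∀ a b : Fin n,
      2 ≤ (Finset.univ.filter (fun b => Relation.EqvGen R b a)).card →
      Relation.EqvGen R b a → ∃ j, b ∈ I j ∧ ∃ x ∈ I j, Relation.EqvGen R x a := by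
    intro a b hcard2 hba
    have hb : b ∈ Finset.univ.filter (fun b => Relation.EqvGen R b a) := by
      simp [hba]
    obtain ⟨c, hc, hcb⟩ := Finset.exists_mem_ne (Nat.lt_of_lt_of_le one_lt_two hcard2) b
    simp only [Finset.mem_filter] at hc
    have hbc : Relation.EqvGen R b c :=
      Relation.EqvGen.trans _ _ _ hba (Relation.EqvGen.symm _ _ hc.2)
    rcases eqvGen_endpoints hbc with rfl | ⟨⟨j, hbj⟩, _⟩
    · exact absurd rfl hcb
    · exact ⟨j, hbj, b, hbj, hba⟩
  constructor
  · intro a hA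
    refine ⟨{j | ∃ x ∈ I j, Relation.EqvGen R x a}, ?_⟩
    ext b
    simp only [Set.mem_setOf_eq, Set.mem_iUnion, Finset.coe_sort_coe, Finset.mem_coe]
    constructor
    · intro hba
      obtain ⟨j, hbj, x, hx, hxa⟩ := key a b hA hba
      exact ⟨j, ⟨x, hx, hxa⟩, hbj⟩
    · rintro ⟨j, ⟨x, hx, hxa⟩, hbj⟩
      exact block_subset_class hx hbj hxa
  · intro w hw hsum a hA
    obtain ⟨j, haj, x, hx, hxa⟩ := key a a hA (Relation.EqvGen.refl a)
    have hsub : I j ⊆ Finset.univ.filter (fun b => Relation.EqvGen R b a) := by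
      intro b hb
      simp only [Finset.mem_filter, Finset.mem_univ, true_and]
      exact block_subset_class hx hb hxa
    calc 1 < ∑ i ∈ I j, w i := hsum j
      _ ≤ _ := Finset.sum_le_sum_of_subset_of_nonneg hsub (fun i _ _ => (hw i).le)
end

section
/- Let k be a field, d ≥ 1, n ≥ 3, and let p, q : {1,…,n} → k^d be injective maps (configurations of n pairwise distinct labeled points). Suppose that for every 3-element subset I ⊆ {1,…,n} there exist c_I ∈ k with c_I ≠ 0 and v_I ∈ k^d such that q_i = c_I·p_i + v_I for all i ∈ I. Then there exist c ∈ k with c ≠ 0 and v ∈ k^d such that q_i = c·p_i + v for all i ∈ {1,…,n}. -/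
theorem triples_determine_configuration (k : Type*) [Field k] (d n : ℕ)
    (hd : 1 ≤ d) (hn : 3 ≤ n)
    (p q : Fin n → (Fin d → k)) (hp : Function.Injective p) (hq : Function.Injective q)
    (h : ∀ I : Finset (Fin n), I.card = 3 →
      ∃ c : k, c ≠ 0 ∧ ∃ v : Fin d → k, ∀ i ∈ I, q i = c • p i + v) :
    ∃ c : k, c ≠ 0 ∧ ∃ v : Fin d → k, ∀ i, q i = c • p i + v := by
  set a : Fin n := ⟨0, by omega⟩ with ha
  set b : Fin n := ⟨1, by omega⟩ with hb
  set e : Fin n := ⟨2, by omega⟩ with he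
  have hab : a ≠ b := by simp [ha, hb, Fin.ext_iff]
  have hpab : p b - p a ≠ 0 := by
    intro h0
    exact hab (hp (sub_eq_zero.mp h0)).symm
  have hcard : ∀ j : Fin n, j ≠ a → j ≠ b → ({a, b, j} : Finset (Fin n)).card = 3 := by
    intro j hja hjb
    rw [Finset.card_insert_of_notMem (by simp [hab, hja.symm]),
      Finset.card_insert_of_notMem (by simp [hjb.symm]), Finset.card_singleton]
  obtain ⟨c, hc, v, hv⟩ := h {a, b, e} (hcard e (by simp [ha, he, Fin.ext_iff])
    (by simp [hb, he, Fin.ext_iff]))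
  have hva : q a = c • p a + v := hv a (by simp)
  have hvb : q b = c • p b + v := hv b (by simp)
  refine ⟨c, hc, v, fun j => ?_⟩
  by_cases hja : j = a
  · rw [hja]; exact hva
  by_cases hjb : j = b
  · rw [hjb]; exact hvb
  obtain ⟨c', hc', v', hv'⟩ := h {a, b, j} (hcard j hja hjb)
  have h'a : q a = c' • p a + v' := hv' a (by simp)
  have h'b : q b = c' • p b + v' := hv' b (by simp)
  have h'j : q j = c' • p j + v' := hv' j (by simp)
  have hcc : (c - c') • (p b - p a) = 0 := by
    have : c • p b + v - (c • p a + v) = c' • p b + v' - (c' • p a + v') := by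
      rw [← hva, ← hvb, ← h'a, ← h'b]
    rw [sub_smul, smul_sub, smul_sub]
    abel_nf
    abel_nf at this
    linear_combination (norm := abel) this
  have hceq : c = c' := by
    rcases smul_eq_zero.mp hcc with h0 | h0
    · exact sub_eq_zero.mp h0
    · exact absurd h0 hpab
  have hveq : v = v' := by
    have := hva.symm.trans h'a
    rw [hceq] at this
    exact add_left_cancel this
  rw [h'j, hceq, hveq]
end

section
/- Let k be a field with at least 4 elements and d ≥ 1. There exist injective maps p, q : {1,2,3} → k^d such that for every 2-element subset {i,j} ⊆ {1,2,3} the difference q_j − q_i is a nonzero scalar multiple of p_j − p_i, and yet there exist no c ∈ k^× and v ∈ k^d with q_i = c·p_i + v for all i = 1,2,3. -/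
theorem pairs_do_not_determine_configuration (k : Type*) [Field k] (d : ℕ) (hd : 1 ≤ d)
    (hcard : ∃ s : Finset k, 4 ≤ s.card) :
    ∃ p q : Fin 3 → (Fin d → k),
      Function.Injective p ∧ Function.Injective q ∧
      (∀ i j : Fin 3, i ≠ j → ∃ c : k, c ≠ 0 ∧ q j - q i = c • (p j - p i)) ∧
      ¬ ∃ c : k, c ≠ 0 ∧ ∃ v : Fin d → k, ∀ i, q i = c • p i + v := by
  classical
  obtain ⟨s4, hs4⟩ := hcard
  have hcard2 : 1 < (s4 \ {(0 : k), 1}).card := by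
    have := Finset.le_card_sdiff ({(0 : k), 1}) s4
    have hle : ({(0 : k), 1} : Finset k).card ≤ 2 := Finset.card_insert_le _ _
    omega
  obtain ⟨t, ht, u, hu, htu⟩ := Finset.one_lt_card.mp hcard2
  simp only [Finset.mem_sdiff, Finset.mem_insert, Finset.mem_singleton, not_or] at ht hu
  obtain ⟨-, ht0, ht1⟩ := ht
  obtain ⟨-, hu0, hu1⟩ := hu
  let z : Fin d := ⟨0, hd⟩
  have hainj : Function.Injective ![(0 : k), 1, t] := by
    intro i j hij
    fin_cases i <;> fin_cases j <;> simp_all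
  have hbinj : Function.Injective ![(0 : k), 1, u] := by
    intro i j hij
    fin_cases i <;> fin_cases j <;> simp_all
  refine ⟨fun i => Pi.single z (![(0 : k), 1, t] i),
          fun i => Pi.single z (![(0 : k), 1, u] i), ?_, ?_, ?_, ?_⟩
  · intro i j hij
    exact hainj (by simpa using congrFun hij z)
  · intro i j hij
    exact hbinj (by simpa using congrFun hij z)
  · intro i j hij
    set A : Fin 3 → k := ![(0 : k), 1, t]
    set B : Fin 3 → k := ![(0 : k), 1, u]
    have haij : A j - A i ≠ 0 := sub_ne_zero.mpr (fun h => hij (hainj h).symm)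
    have hbij : B j - B i ≠ 0 := sub_ne_zero.mpr (fun h => hij (hbinj h).symm)
    refine ⟨(B j - B i) / (A j - A i), div_ne_zero hbij haij, ?_⟩
    funext m
    by_cases hm : m = z
    · subst hm
      simp only [Pi.sub_apply, Pi.smul_apply, Pi.single_eq_same, smul_eq_mul]
      field_simp
    · simp [Pi.single_eq_of_ne hm]
  · rintro ⟨c, hc, v, hv⟩
    have h0 := congrFun (hv 0) z
    have h1 := congrFun (hv 1) z
    have h2 := congrFun (hv 2) z
    simp only [Pi.add_apply, Pi.smul_apply, Pi.single_eq_same, smul_eq_mul,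
      Matrix.cons_val_zero, Matrix.cons_val_one, Matrix.head_cons] at h0 h1 h2
    simp only [Matrix.cons_val_two, Matrix.tail_cons, Matrix.head_cons] at h2
    -- h0 : 0 = c * 0 + v z, h1 : 1 = c * 1 + v z, h2 : u = c * t + v z
    have hc1 : c = 1 := by linear_combination h0 - h1
    apply htu
    linear_combination h0 - h2 - t * hc1
end

section
/- Let R be a commutative ring, A a commutative R-algebra, and I ⊆ A an ideal. Assume that A/I is flat as an R-module and that for every m ≥ 0 the A/I-module I^m/I^{m+1} is flat over A/I. Then for every m ≥ 1, the R-module A/I^m is flat. -/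
open LinearMap TensorProduct

/-- An extension of flat modules is flat: if `0 → N → M → P → 0` is exact with `N`, `P`
flat, then `M` is flat. -/
lemma flat_of_ses {R M N P : Type*} [CommRing R]
    [AddCommGroup M] [Module R M] [AddCommGroup N] [Module R N]
    [AddCommGroup P] [Module R P]
    (f : N →ₗ[R] M) (g : M →ₗ[R] P)
    (hf : Function.Injective f) (hg : Function.Surjective g)
    (hex : Function.Exact f g) [Module.Flat R N] [Module.Flat R P] :
    Module.Flat R M := by
  rw [Module.Flat.iff_rTensor_injective']
  intro J
  rw [injective_iff_map_eq_zero]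
  intro x hx
  -- image of `x` in `J ⊗ P` is zero
  have h1 : (g.lTensor ↥J) x = 0 := by
    have hP := (Module.Flat.iff_rTensor_injective' (R := R) (M := P)).mp ‹_› J
    apply hP
    have : (J.subtype.rTensor P) ((g.lTensor ↥J) x) =
        (g.lTensor R) ((J.subtype.rTensor M) x) := by
      rw [← LinearMap.comp_apply, ← LinearMap.comp_apply,
        LinearMap.rTensor_comp_lTensor, LinearMap.lTensor_comp_rTensor]
    rw [this, hx, map_zero, map_zero]
  -- so `x` comes from `J ⊗ N`
  obtain ⟨y, hy⟩ := (lTensor_exact (↥J) hex hg) x |>.mp h1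
  -- the image of `y` in `N` is zero
  have h2 : (f.lTensor R) ((J.subtype.rTensor N) y) = 0 := by
    have : (f.lTensor R) ((J.subtype.rTensor N) y) =
        (J.subtype.rTensor M) ((f.lTensor ↥J) y) := by
      rw [← LinearMap.comp_apply, ← LinearMap.comp_apply,
        LinearMap.lTensor_comp_rTensor, LinearMap.rTensor_comp_lTensor]
    rw [this, hy, hx]
  have hfR : Function.Injective (f.lTensor R) :=
    Module.Flat.lTensor_preserves_injective_linearMap f hf
  have h3 : (J.subtype.rTensor N) y = 0 := by
    apply hfR
    rw [h2, map_zero]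
  have hN := (Module.Flat.iff_rTensor_injective' (R := R) (M := N)).mp ‹_› J
  have : y = 0 := by
    apply hN
    rw [h3, map_zero]
  rw [← hy, this, map_zero]

theorem flat_quotient_powers (R A : Type*) [CommRing R] [CommRing A] [Algebra R A]
    (I : Ideal A)
    (hflat : Module.Flat R (A ⧸ I))
    (hgraded : ∀ m : ℕ,
      Module.Flat (A ⧸ I) ((↥(I ^ m)) ⧸ (I • (⊤ : Submodule A ↥(I ^ m))))) :
    ∀ m : ℕ, 1 ≤ m → Module.Flat R (A ⧸ I ^ m) := by
  intro m hm
  induction m, hm using Nat.le_induction with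
  | base =>
    exact Module.Flat.of_linearEquiv (M := A ⧸ I) (N := A ⧸ I ^ 1)
      (Ideal.quotientEquivAlgOfEq R (pow_one I)).toLinearEquiv
  | succ n hn ih =>
    -- the graded piece is flat over R
    haveI : Module.Flat (A ⧸ I) ((↥(I ^ n)) ⧸ (I • (⊤ : Submodule A ↥(I ^ n)))) :=
      hgraded n
    haveI hQ : Module.Flat R ((↥(I ^ n)) ⧸ (I • (⊤ : Submodule A ↥(I ^ n)))) :=
      Module.Flat.trans R (A ⧸ I) _
    haveI hPn : Module.Flat R (A ⧸ I ^ n) := ih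
    -- the short exact sequence
    set Q := (↥(I ^ n)) ⧸ (I • (⊤ : Submodule A ↥(I ^ n))) with hQdef
    have hker : ∀ x : ↥(I ^ n), (x : A) ∈ I ^ (n + 1) ↔
        x ∈ (I • (⊤ : Submodule A ↥(I ^ n))) := by
      intro x
      rw [Submodule.mem_smul_top_iff, pow_succ']
      rfl
    have hle : I • (⊤ : Submodule A ↥(I ^ n)) ≤
        LinearMap.ker ((I ^ (n + 1)).mkQ ∘ₗ (I ^ n).subtype) := by
      intro x hx
      simp only [LinearMap.mem_ker, LinearMap.comp_apply, Submodule.subtype_apply,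
        Submodule.mkQ_apply, Submodule.Quotient.mk_eq_zero]
      exact (hker x).mpr hx
    let f0 : Q →ₗ[A] A ⧸ I ^ (n + 1) :=
      Submodule.liftQ _ ((I ^ (n + 1)).mkQ ∘ₗ (I ^ n).subtype) hle
    have hle2 : (I ^ (n + 1) : Submodule A A) ≤ LinearMap.ker (I ^ n).mkQ := by
      rw [Submodule.ker_mkQ]
      exact Ideal.pow_le_pow_right (Nat.le_succ n)
    let g0 : (A ⧸ I ^ (n + 1)) →ₗ[A] A ⧸ I ^ n :=
      Submodule.liftQ _ (I ^ n).mkQ hle2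
    have hf0 : Function.Injective f0 := by
      rw [← LinearMap.ker_eq_bot]
      apply Submodule.ker_liftQ_eq_bot
      intro x hx
      simp only [LinearMap.mem_ker, LinearMap.comp_apply, Submodule.subtype_apply,
        Submodule.mkQ_apply, Submodule.Quotient.mk_eq_zero] at hx
      exact (hker x).mp hx
    have hg0 : Function.Surjective g0 := by
      intro z
      obtain ⟨a, rfl⟩ := Submodule.mkQ_surjective _ z
      exact ⟨Submodule.Quotient.mk a, rfl⟩
    have hex0 : Function.Exact f0 g0 := by
      rw [LinearMap.exact_iff]
      rw [Submodule.ker_liftQ, Submodule.range_liftQ, Submodule.ker_mkQ,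
        LinearMap.range_comp, Submodule.range_subtype]
    exact flat_of_ses (f0.restrictScalars R) (g0.restrictScalars R) hf0 hg0 hex0
end
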